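/- Let (X,u) and (Y,v) be closure spaces and let 𝒜 be a collection of compact subsets of (X,u). Then the 𝒜-topology on Y^X is proper. -/

import Mathlib

open Set

universe u

/-- A Čech closure operator on a type `X`: it satisfies (C1) `cl ∅ = ∅`,
(C2) `A ⊆ cl A` and (C3) `cl (A ∪ B) = cl A ∪ cl B`.  The pair `(X, u)` is a
(Čech) closure space. -/
structure CechClosure (X : Type u) : Type u where
  cl : Set X → Set X
  cl_empty : cl ∅ = ∅
  subset_cl : ∀ A : Set X, A ⊆ cl A
  cl_union : ∀ A B : Set X, cl (A ∪ B) = cl A ∪ cl B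

namespace CechClosure

variable {X Y Z : Type u}

/-- The interior operator of a closure space: `int_u A = X \ u (X \ A)`. -/
def interior (u : CechClosure X) (A : Set X) : Set X := (u.cl Aᶜ)ᶜ

/-- `U` is a neighbourhood of `x` in `(X, u)` if `x ∈ int_u U`. -/
def Nhd (u : CechClosure X) (x : X) (U : Set X) : Prop := x ∈ u.interior U

theorem interior_subset (u : CechClosure X) (A : Set X) : u.interior A ⊆ A := by
  intro x hx
  by_contra h
  exact hx (u.subset_cl _ h)

theorem interior_inter (u : CechClosure X) (A B : Set X) :
    u.interior (A ∩ B) = u.interior A ∩ u.interior B := by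
  unfold interior
  rw [compl_inter, u.cl_union, compl_union]

theorem nhd_univ (u : CechClosure X) (x : X) : u.Nhd x univ := by
  simp [Nhd, interior, u.cl_empty]

theorem nhd_inter (u : CechClosure X) {x : X} {A B : Set X} (hA : u.Nhd x A)
    (hB : u.Nhd x B) : u.Nhd x (A ∩ B) := by
  have h := u.interior_inter A B
  unfold Nhd at *
  rw [h]
  exact ⟨hA, hB⟩

/-- A function `f : (X, u) → (Y, v)` between closure spaces is continuous if
`f (u A) ⊆ v (f A)` for every `A ⊆ X`. -/
def Continuous (u : CechClosure X) (v : CechClosure Y) (f : X → Y) : Prop :=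
  ∀ A : Set X, f '' u.cl A ⊆ v.cl (f '' A)

/-- The product of two closure spaces: `(z, x)` is in the closure of `S` iff every
"rectangle" `W ×ˢ U` of neighbourhoods `W` of `z` and `U` of `x` meets `S`. -/
def prod (w : CechClosure Z) (u : CechClosure X) : CechClosure (Z × X) where
  cl S := {p | ∀ W U, w.Nhd p.1 W → u.Nhd p.2 U → (W ×ˢ U ∩ S).Nonempty}
  cl_empty := by
    ext p
    simp only [mem_setOf_eq, mem_empty_iff_false, iff_false]
    intro h
    rcases h univ univ (w.nhd_univ _) (u.nhd_univ _) with ⟨q, -, hq⟩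
    exact hq
  subset_cl := by
    intro S p hp W U hW hU
    exact ⟨p, ⟨⟨w.interior_subset _ hW, u.interior_subset _ hU⟩, hp⟩⟩
  cl_union := by
    intro S T
    ext p
    simp only [mem_setOf_eq, mem_union]
    constructor
    · intro h
      by_contra hc
      push_neg at hc
      obtain ⟨h1, h2⟩ := hc
      simp only [← Set.not_nonempty_iff_eq_empty] at h1 h2
      obtain ⟨W1, U1, hW1, hU1, hne1⟩ := h1
      obtain ⟨W2, U2, hW2, hU2, hne2⟩ := h2
      rcases h (W1 ∩ W2) (U1 ∩ U2) (w.nhd_inter hW1 hW2) (u.nhd_inter hU1 hU2) with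
        ⟨q, ⟨⟨hq1, hq2⟩, hqST⟩⟩
      rcases hqST with hqS | hqT
      · exact hne1 ⟨q, ⟨⟨hq1.1, hq2.1⟩, hqS⟩⟩
      · exact hne2 ⟨q, ⟨⟨hq1.2, hq2.2⟩, hqT⟩⟩
    · rintro (h | h) W U hW hU
      · rcases h W U hW hU with ⟨q, hq1, hq2⟩
        exact ⟨q, hq1, Or.inl hq2⟩
      · rcases h W U hW hU with ⟨q, hq1, hq2⟩
        exact ⟨q, hq1, Or.inr hq2⟩

/-- `Y^X`: the type of continuous functions between the closure spaces
`(X, u)` and `(Y, v)`. -/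
def ContMap (u : CechClosure X) (v : CechClosure Y) : Type u :=
  {f : X → Y // Continuous u v f}

/-- A closure operator `σ` on `Y^X` is proper (splitting) if for every closure space
`(Z, w)`, continuity of `g : (Z, w) × (X, u) → (Y, v)` implies continuity of
`g* : (Z, w) → (Y^X, σ)`, where `g (z, x) = (g* z) x`. -/
def Proper (u : CechClosure X) (v : CechClosure Y) (σ : CechClosure (ContMap u v)) : Prop :=
  ∀ (Z : Type u) (w : CechClosure Z) (G : Z → ContMap u v),
    Continuous (w.prod u) v (fun p => (G p.1).1 p.2) → Continuous w σ G

/-- A closure operator `σ` on `Y^X` is admissible (jointly continuous) if for every closure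
space `(Z, w)`, continuity of `g* : (Z, w) → (Y^X, σ)` implies continuity of
`g : (Z, w) × (X, u) → (Y, v)`, where `g (z, x) = (g* z) x`. -/
def Admissible (u : CechClosure X) (v : CechClosure Y) (σ : CechClosure (ContMap u v)) : Prop :=
  ∀ (Z : Type u) (w : CechClosure Z) (G : Z → ContMap u v),
    Continuous w σ G → Continuous (w.prod u) v (fun p => (G p.1).1 p.2)

/-- A topological space regarded as a closure space via its (Kuratowski) closure operator. -/
def ofTop {Z : Type u} (t : TopologicalSpace Z) : CechClosure Z :=
  letI := t
  { cl := fun A => _root_.closure A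
    cl_empty := closure_empty
    subset_cl := fun _ => subset_closure
    cl_union := fun _ _ => closure_union }

/-- `le` is the order relation of a directed set: a reflexive and transitive relation on a
nonempty type in which every two elements have an upper bound. -/
structure IsDirectedOrder {Λ : Type*} (le : Λ → Λ → Prop) : Prop where
  refl : ∀ a, le a a
  trans : ∀ a b c, le a b → le b c → le a c
  directed : ∀ a b, ∃ c, le a c ∧ le b c
  nonempty : Nonempty Λ

/-- Convergence of a net `s : Λ → X` (with order `le` on `Λ`) to a point `x` in a closure
space `(X, u)`: every neighbourhood of `x` contains `s l` residually. -/
def NetConv (u : CechClosure X) {Λ : Type*} (le : Λ → Λ → Prop) (s : Λ → X) (x : X) : Prop :=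
  ∀ U : Set X, u.Nhd x U → ∃ l₀, ∀ l, le l₀ l → s l ∈ U

/-- The product order on `Λ × M`. -/
def prodLE {Λ M : Type*} (leΛ : Λ → Λ → Prop) (leM : M → M → Prop) :
    Λ × M → Λ × M → Prop :=
  fun p q => leΛ p.1 q.1 ∧ leM p.2 q.2

/-- A net `F : Λ → Y^X` converges continuously to `f ∈ Y^X` if for every `x ∈ X` and every
net `s : M → X` converging to `x` in `(X, u)`, the net `(l, m) ↦ (F l) (s m)` (indexed by
`Λ × M` with the product order) converges to `f x` in `(Y, v)`. -/
def ContConv (u : CechClosure X) (v : CechClosure Y) {Λ : Type u} (leΛ : Λ → Λ → Prop)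
    (F : Λ → ContMap u v) (f : ContMap u v) : Prop :=
  ∀ (M : Type u) (leM : M → M → Prop), IsDirectedOrder leM →
    ∀ (s : M → X) (x : X), NetConv u leM s x →
      NetConv v (prodLE leΛ leM) (fun p : Λ × M => (F p.1).1 (s p.2)) (f.1 x)

/-- The upper limit of a net `A : Λ → Set X` of subsets of a closure space `(X, u)`: the set
of points `x` such that for every `l₀` and every neighbourhood `U` of `x` there is `l ≥ l₀`
with `A l ∩ U ≠ ∅`. -/
def UpperLim (u : CechClosure X) {Λ : Type*} (le : Λ → Λ → Prop) (A : Λ → Set X) : Set X :=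
  {x | ∀ (l₀ : Λ) (U : Set X), u.Nhd x U → ∃ l, le l₀ l ∧ (A l ∩ U).Nonempty}

/-- `g : M → α` is a subnet of `f : Λ → α`: there is `φ : M → Λ` with `g = f ∘ φ` such that
`φ` is residually above any given index of `Λ`. -/
def IsSubnet {α : Type*} {Λ M : Type*} (leΛ : Λ → Λ → Prop) (leM : M → M → Prop)
    (f : Λ → α) (g : M → α) : Prop :=
  ∃ φ : M → Λ, (∀ m, g m = f (φ m)) ∧ ∀ l₀, ∃ m₀, ∀ m, leM m₀ m → leΛ l₀ (φ m)

end CechClosure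
namespace CechClosure

variable {X Y : Type u}

/-- A subset `A` of a closure space `(X, u)` is compact if every interior cover of `A`
(a family of sets whose interiors cover `A`) has a finite subcover. -/
def IsCompactSubset (u : CechClosure X) (A : Set X) : Prop :=
  ∀ 𝒢 : Set (Set X), (∀ x ∈ A, ∃ G ∈ 𝒢, x ∈ u.interior G) →
    ∃ F : Finset (Set X), ↑F ⊆ 𝒢 ∧ A ⊆ ⋃₀ (F : Set (Set X))

/-- The `𝒜`-topology on `Y^X`, for a family `𝒜` of subsets of `X`: the topology with
subbase all sets `(A, V) = {f | f '' A ⊆ V}` with `A ∈ 𝒜` and `V ⊆ Y` open and nonempty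
(`V = int_v V ≠ ∅`). -/
def setTopology (u : CechClosure X) (v : CechClosure Y) (𝒜 : Set (Set X)) :
    TopologicalSpace (ContMap u v) :=
  TopologicalSpace.generateFrom
    {S | ∃ A ∈ 𝒜, ∃ V : Set Y, v.interior V = V ∧ (v.interior V).Nonempty ∧
      S = {f : ContMap u v | f.1 '' A ⊆ V}}

theorem cl_mono' (u : CechClosure X) {A B : Set X} (h : A ⊆ B) : u.cl A ⊆ u.cl B := by
  have hB : B = A ∪ B := (union_eq_self_of_subset_left h).symm
  rw [hB, u.cl_union]; exact subset_union_left

theorem nhd_meets_of_mem_cl {Z : Type u} (w : CechClosure Z) {z : Z} {S W : Set Z}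
    (hz : z ∈ w.cl S) (hW : w.Nhd z W) : (W ∩ S).Nonempty := by
  by_contra h
  rw [not_nonempty_iff_eq_empty] at h
  have hSW : S ⊆ Wᶜ := fun s hs hsW =>
    (Set.eq_empty_iff_forall_notMem.mp h s) ⟨hsW, hs⟩
  exact hW (w.cl_mono' hSW hz)

theorem nhd_preimage' {X' Y' : Type u} {u : CechClosure X'} {v : CechClosure Y'} {f : X' → Y'}
    (hf : Continuous u v f) {x : X'} {V : Set Y'} (hV : f x ∈ v.interior V) :
    x ∈ u.interior (f ⁻¹' V) := by
  intro hx
  apply hV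
  have h1 : f x ∈ f '' u.cl ((f ⁻¹' V)ᶜ) := ⟨x, hx, rfl⟩
  have h2 := hf ((f ⁻¹' V)ᶜ) h1
  refine v.cl_mono' ?_ h2
  rintro y ⟨a, ha, rfl⟩
  exact ha

theorem prod_nhd_iff' {Z : Type u} (w : CechClosure Z) (u : CechClosure X) (p : Z × X)
    (T : Set (Z × X)) :
    (w.prod u).Nhd p T ↔ ∃ W U, w.Nhd p.1 W ∧ u.Nhd p.2 U ∧ W ×ˢ U ⊆ T := by
  unfold Nhd interior prod
  simp only [mem_compl_iff, mem_setOf_eq]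
  constructor
  · intro h
    push_neg at h
    obtain ⟨W, U, hW, hU, hne⟩ := h
    refine ⟨W, U, hW, hU, fun q hq => ?_⟩
    by_contra hqT
    rw [eq_empty_iff_forall_notMem] at hne
    exact hne q ⟨hq, hqT⟩
  · rintro ⟨W, U, hW, hU, hsub⟩ h
    rcases h W U hW hU with ⟨q, hq1, hq2⟩
    exact hq2 (hsub hq1)

theorem nhd_sInter' {Z : Type u} (w : CechClosure Z) {z : Z} {F : Set (Set Z)} (hF : F.Finite) :
    (∀ W ∈ F, w.Nhd z W) → w.Nhd z (⋂₀ F) := by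
  refine Set.Finite.induction_on (motive := fun s _ => (∀ W ∈ s, w.Nhd z W) → w.Nhd z (⋂₀ s)) F hF (fun _ => by simpa using w.nhd_univ z) ?_
  intro a s _ _ ih h
  rw [sInter_insert]
  exact w.nhd_inter (h a (mem_insert _ _)) (ih fun W hW => h W (mem_insert_of_mem _ hW))

theorem key_compact {Z : Type u} (u : CechClosure X) (v : CechClosure Y) (w : CechClosure Z)
    (G : Z → ContMap u v)
    (hg : Continuous (w.prod u) v (fun p => (G p.1).1 p.2))
    {z : Z} {A : Set X} (hAc : IsCompactSubset u A) {V : Set Y}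
    (hVo : v.interior V = V) (hzA : (G z).1 '' A ⊆ V) :
    ∃ W, w.Nhd z W ∧ ∀ z' ∈ W, (G z').1 '' A ⊆ V := by
  classical
  set 𝒢 : Set (Set X) := {U | ∃ W, w.Nhd z W ∧ ∀ z' ∈ W, ∀ x' ∈ U, (G z').1 x' ∈ V} with h𝒢
  have hcov : ∀ x ∈ A, ∃ U ∈ 𝒢, x ∈ u.interior U := by
    intro x hx
    have hgx : (fun p : Z × X => (G p.1).1 p.2) (z, x) ∈ v.interior V := by
      rw [hVo]; exact hzA ⟨x, hx, rfl⟩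
    have hpre : (w.prod u).Nhd (z, x) ((fun p : Z × X => (G p.1).1 p.2) ⁻¹' V) :=
      nhd_preimage' hg hgx
    rw [prod_nhd_iff'] at hpre
    obtain ⟨W, U, hW, hU, hsub⟩ := hpre
    exact ⟨U, ⟨W, hW, fun z' hz' x' hx' => hsub (mk_mem_prod hz' hx')⟩, hU⟩
  obtain ⟨F, hF𝒢, hcover⟩ := hAc 𝒢 hcov
  have hsel : ∀ U : Set X, ∃ W, U ∈ 𝒢 →
      (w.Nhd z W ∧ ∀ z' ∈ W, ∀ x' ∈ U, (G z').1 x' ∈ V) := by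
    intro U
    by_cases hU : U ∈ 𝒢
    · obtain ⟨W, h1, h2⟩ := hU
      exact ⟨W, fun _ => ⟨h1, h2⟩⟩
    · exact ⟨univ, fun h => absurd h hU⟩
  choose Wsel hWsel using hsel
  refine ⟨⋂₀ (Wsel '' ↑F), nhd_sInter' w (F.finite_toSet.image _) ?_, ?_⟩
  · rintro W ⟨U, hU, rfl⟩
    exact (hWsel U (hF𝒢 hU)).1
  · rintro z' hz' y ⟨x, hx, rfl⟩
    obtain ⟨U, hUF, hxU⟩ := hcover hx
    exact (hWsel U (hF𝒢 hUF)).2 z' (hz' _ ⟨U, hUF, rfl⟩) x hxU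

/-- Let `(X, u)` and `(Y, v)` be closure spaces and `𝒜` a collection of compact subsets
of `(X, u)`.  Then the `𝒜`-topology on `Y^X` is proper. -/
theorem setTopology_proper (u : CechClosure X) (v : CechClosure Y) (𝒜 : Set (Set X))
    (hA : ∀ A ∈ 𝒜, IsCompactSubset u A) :
    Proper u v (ofTop (setTopology u v 𝒜)) := by
  classical
  intro Z w G hg S
  rintro y ⟨z, hz, rfl⟩
  letI t := setTopology u v 𝒜
  show G z ∈ @_root_.closure _ t (G '' S)
  have hb := TopologicalSpace.isTopologicalBasis_of_subbasis (t := t) rfl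
  rw [hb.mem_closure_iff]
  rintro o ⟨F, ⟨hFfin, hFsub⟩, rfl⟩ hGz
  have hsel : ∀ T : Set (ContMap u v), ∃ W, T ∈ F →
      (w.Nhd z W ∧ ∀ z' ∈ W, G z' ∈ T) := by
    intro T
    by_cases hT : T ∈ F
    · obtain ⟨A, hA𝒜, V, hVo, hVne, rfl⟩ := hFsub hT
      have hGzT : (G z).1 '' A ⊆ V := hGz _ hT
      obtain ⟨W, hW, hW2⟩ := key_compact u v w G hg (hA A hA𝒜) hVo hGzT
      exact ⟨W, fun _ => ⟨hW, fun z' hz' => hW2 z' hz'⟩⟩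
    · exact ⟨univ, fun h => absurd h hT⟩
  choose Wsel hWsel using hsel
  have hnhd : w.Nhd z (⋂₀ (Wsel '' F)) :=
    nhd_sInter' w (hFfin.image _) (by rintro W ⟨T, hT, rfl⟩; exact (hWsel T hT).1)
  obtain ⟨z', hz'W, hz'S⟩ := nhd_meets_of_mem_cl w hz hnhd
  refine ⟨G z', mem_sInter.mpr fun T hT => ?_, ⟨z', hz'S, rfl⟩⟩
  exact (hWsel T hT).2 z' (hz'W _ ⟨T, hT, rfl⟩)

end CechClosure
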